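/- For every n ≥ 1, R_n(13/2) equals the set of layered RGFs of length n, i.e. words of the form w = 1^{n_1} 2^{n_2} ⋯ m^{n_m} for some m ≥ 1 and positive integers n_1,…,n_m with n_1 + ⋯ + n_m = n. -/

import Mathlib

open Finset

/-- `IsRGF w` : `w = a₁⋯aₙ` is a restricted growth function: all letters are
positive, the first letter is `1` and each later letter is at most one more
than the maximum of the preceding prefix. -/
def IsRGF (w : List ℕ) : Prop :=
  (∀ a ∈ w, 1 ≤ a) ∧
  (0 < w.length → w.getD 0 0 = 1) ∧
  (∀ j : ℕ, j + 1 < w.length →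
    w.getD (j + 1) 0 ≤ 1 + (w.take (j + 1)).foldr max 0)

/-- The set partition encoded by the word `w` contains the set-partition
pattern encoded by the word `p`:  there are positions, listed increasingly,
whose "same block" (= same letter) pattern in `w` is exactly that of `p`. -/
def ContainsPat (w p : List ℕ) : Prop :=
  ∃ f : Fin p.length → Fin w.length, StrictMono f ∧
    ∀ a b : Fin p.length, (w.get (f a) = w.get (f b) ↔ p.get a = p.get b)

/-- `Rn n p` : the restricted growth functions of length `n` whose associated
set partition avoids the pattern (of set partitions) encoded by the RGF `p`.
Via the standard bijection `σ ↦ w(σ)` this is `R_n(π) ≅ Π_n(π)`.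
Patterns of `[3]`:  `1/2/3 ↦ [1,2,3]`, `1/23 ↦ [1,2,2]`, `13/2 ↦ [1,2,1]`,
`12/3 ↦ [1,1,2]`, `123 ↦ [1,1,1]`. -/
def Rn (n : ℕ) (p : List ℕ) : Set (List ℕ) :=
  {w | w.length = n ∧ IsRGF w ∧ ¬ ContainsPat w p}

/-- `lb` : sum over positions `j` of the number of distinct values occurring
before position `j` that are bigger than the letter at `j`. -/
def statLB (w : List ℕ) : ℕ :=
  ∑ j ∈ Finset.range w.length,
    ((w.take j).toFinset.filter (fun v => w.getD j 0 < v)).card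

/-- `ls` : left and smaller. -/
def statLS (w : List ℕ) : ℕ :=
  ∑ j ∈ Finset.range w.length,
    ((w.take j).toFinset.filter (fun v => v < w.getD j 0)).card

/-- `rb` : right and bigger. -/
def statRB (w : List ℕ) : ℕ :=
  ∑ j ∈ Finset.range w.length,
    ((w.drop (j + 1)).toFinset.filter (fun v => w.getD j 0 < v)).card

/-- `rs` : right and smaller. -/
def statRS (w : List ℕ) : ℕ :=
  ∑ j ∈ Finset.range w.length,
    ((w.drop (j + 1)).toFinset.filter (fun v => v < w.getD j 0)).card

/-- The four–variable generating function
`F_n(π;q,r,s,t) = ∑_{σ∈Π_n(π)} q^{lb} r^{ls} s^{rb} t^{rs}`, with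
`q = X 0`, `r = X 1`, `s = X 2`, `t = X 3`. -/
noncomputable def Fgen (n : ℕ) (p : List ℕ) : MvPolynomial (Fin 4) ℤ :=
  ∑ᶠ w ∈ Rn n p,
    (MvPolynomial.X 0 : MvPolynomial (Fin 4) ℤ) ^ statLB w *
      MvPolynomial.X 1 ^ statLS w *
      MvPolynomial.X 2 ^ statRB w *
      MvPolynomial.X 3 ^ statRS w

/-- `LB_n(π;q)`. -/
noncomputable def LBp (n : ℕ) (p : List ℕ) : Polynomial ℤ :=
  ∑ᶠ w ∈ Rn n p, Polynomial.X ^ statLB w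

/-- `LS_n(π;q)`. -/
noncomputable def LSp (n : ℕ) (p : List ℕ) : Polynomial ℤ :=
  ∑ᶠ w ∈ Rn n p, Polynomial.X ^ statLS w

/-- `RB_n(π;q)`. -/
noncomputable def RBp (n : ℕ) (p : List ℕ) : Polynomial ℤ :=
  ∑ᶠ w ∈ Rn n p, Polynomial.X ^ statRB w

/-- `RS_n(π;q)`. -/
noncomputable def RSp (n : ℕ) (p : List ℕ) : Polynomial ℤ :=
  ∑ᶠ w ∈ Rn n p, Polynomial.X ^ statRS w


lemma foldr_max_init (l : List ℕ) (a : ℕ) : l.foldr max a = max (l.foldr max 0) a := by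
  induction l with
  | nil => simp
  | cons b t ih => simp [List.foldr_cons, ih]

lemma foldr_max_le {l : List ℕ} {x : ℕ} (h : ∀ a ∈ l, a ≤ x) : l.foldr max 0 ≤ x := by
  induction l with
  | nil => simp
  | cons b t ih =>
      simp only [List.foldr_cons]
      have hb := h b (by simp)
      have := ih (fun a ha => h a (by simp [ha]))
      omega

lemma le_foldr_max {l : List ℕ} {a : ℕ} (h : a ∈ l) : a ≤ l.foldr max 0 := by
  induction l with
  | nil => simp at h
  | cons b t ih =>
      simp only [List.foldr_cons]
      rcases List.mem_cons.mp h with rfl | h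
      · omega
      · have := ih h; omega

def StepR (a b : ℕ) : Prop := a ≤ b ∧ b ≤ a + 1

lemma chain'_replicate_step (k a : ℕ) : List.Chain' StepR (List.replicate k a) := by
  induction k with
  | zero => exact List.isChain_nil
  | succ k ih =>
      cases k with
      | zero => exact List.isChain_singleton a
      | succ k' =>
          rw [List.replicate_succ]
          rw [List.replicate_succ (n := k')] at ih ⊢
          exact List.isChain_cons_cons.mpr ⟨⟨le_refl a, Nat.le_succ a⟩, ih⟩

lemma replicate_getLast? (k a : ℕ) : (List.replicate (k + 1) a).getLast? = some a := by
  rw [List.replicate_succ']; exact List.getLast?_concat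

lemma replicate_head? (k a : ℕ) : (List.replicate (k + 1) a).head? = some a := by
  rw [List.replicate_succ]; rfl

lemma bind_props (m : ℕ) (f : ℕ → ℕ) (hm : 1 ≤ m) (hf : ∀ i < m, 0 < f i) :
    (((List.range m).flatMap fun i => List.replicate (f i) (i + 1)).getD 0 0 = 1) ∧
    ((List.range m).flatMap fun i => List.replicate (f i) (i + 1)).getLast? = some m ∧
    List.Chain' StepR ((List.range m).flatMap fun i => List.replicate (f i) (i + 1)) ∧
    ((List.range m).flatMap fun i => List.replicate (f i) (i + 1)).length
      = ∑ i ∈ Finset.range m, f i ∧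
    ((List.range m).flatMap fun i => List.replicate (f i) (i + 1)) ≠ [] := by
  induction m, hm using Nat.le_induction with
  | base =>
      have h0 : 0 < f 0 := hf 0 (by norm_num)
      obtain ⟨k, hk⟩ : ∃ k, f 0 = k + 1 := ⟨f 0 - 1, by omega⟩
      have hL : ((List.range 1).flatMap fun i => List.replicate (f i) (i + 1))
          = List.replicate (k + 1) 1 := by
        rw [show List.range 1 = [0] from rfl]; simp [hk]
      rw [hL]
      refine ⟨by rw [List.replicate_succ]; rfl, replicate_getLast? k 1,
        chain'_replicate_step _ _, by simp [hk], by simp⟩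
  | succ m hm ih =>
      have hf' : ∀ i < m, 0 < f i := fun i hi => hf i (by omega)
      obtain ⟨h1, h2, h3, h4, h5⟩ := ih hf'
      have hfm : 0 < f m := hf m (by omega)
      obtain ⟨k, hk⟩ : ∃ k, f m = k + 1 := ⟨f m - 1, by omega⟩
      have hR : ([m].flatMap fun i => List.replicate (f i) (i + 1))
          = List.replicate (k + 1) (m + 1) := by simp [hk]
      rw [List.range_succ, List.flatMap_append, hR]
      obtain ⟨b, t, hbt⟩ := List.exists_cons_of_ne_nil h5
      refine ⟨?_, ?_, ?_, ?_, ?_⟩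
      · rw [hbt]; rw [hbt] at h1; simpa using h1
      · rw [List.getLast?_append, replicate_getLast?]; rfl
      · refine List.isChain_append.mpr ?_
        refine ⟨h3, chain'_replicate_step _ _, ?_⟩
        intro x hx y hy
        rw [h2] at hx
        rw [replicate_head?] at hy
        simp at hx hy
        subst hx; subst hy
        exact ⟨Nat.le_succ m, le_refl _⟩
      · simp [h4, hk, Finset.sum_range_succ]
      · simp [hbt]

lemma flatMap_range_congr (m : ℕ) (g1 g2 : ℕ → List ℕ) (h : ∀ i < m, g1 i = g2 i) :
    (List.range m).flatMap g1 = (List.range m).flatMap g2 := by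
  unfold List.flatMap
  congr 1
  exact List.map_congr_left (fun a ha => h a (List.mem_range.mp ha))

lemma repr_of_nice (w : List ℕ) (hne : w ≠ []) (hhead : w.getD 0 0 = 1)
    (hchain : List.Chain' StepR w) :
    ∃ (m : ℕ) (f : ℕ → ℕ), 1 ≤ m ∧ (∀ i < m, 0 < f i) ∧ (∑ i ∈ Finset.range m, f i) = w.length ∧
      w = (List.range m).flatMap fun i => List.replicate (f i) (i + 1) := by
  induction w using List.reverseRecOn with
  | nil => exact absurd rfl hne
  | append_singleton l a ih =>
      by_cases hl : l = []
      · subst hl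
        have ha : a = 1 := by simpa using hhead
        subst ha
        exact ⟨1, fun _ => 1, le_refl 1, fun i _ => one_pos, by simp,
          by rw [show List.range 1 = [0] from rfl]; simp⟩
      · obtain ⟨b, t, rfl⟩ := List.exists_cons_of_ne_nil hl
        have hhead' : (b :: t).getD 0 0 = 1 := by simpa using hhead
        have hchain' : List.Chain' StepR (b :: t) := (List.isChain_append.mp hchain).1
        obtain ⟨m, f, hm, hf, hsum, heq⟩ := ih hl hhead' hchain'
        have hlast : (b :: t).getLast? = some m := by
          rw [heq]; exact (bind_props m f hm hf).2.1
        have hjun : StepR m a := by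
          refine (List.isChain_append.mp hchain).2.2 m ?_ a (by simp)
          rw [hlast]; simp
        obtain ⟨hma, ham⟩ := hjun
        rcases (by omega : a = m + 1 ∨ a = m) with rfl | rfl
        · refine ⟨m + 1, fun i => if i = m then 1 else f i, by omega, ?_, ?_, ?_⟩
          · intro i hi
            by_cases h : i = m
            · simp [h]
            · simpa [h] using hf i (by omega)
          · rw [Finset.sum_range_succ, if_pos rfl]
            rw [Finset.sum_congr rfl (fun i hi => if_neg (by
              have := Finset.mem_range.mp hi; omega))]
            simp [hsum]
          · rw [List.range_succ, List.flatMap_append,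
              flatMap_range_congr m _ (fun i => List.replicate (f i) (i + 1))
                (fun i hi => by simp [Nat.ne_of_lt hi]), ← heq]
            simp
        · obtain ⟨k, rfl⟩ : ∃ k, a = k + 1 := ⟨a - 1, by omega⟩
          refine ⟨k + 1, fun i => if i = k then f i + 1 else f i, hm, ?_, ?_, ?_⟩
          · intro i hi
            by_cases h : i = k
            · simp [h]
            · simpa [h] using hf i hi
          · rw [Finset.sum_range_succ, if_pos rfl]
            rw [Finset.sum_congr rfl (fun i hi => if_neg (by
              have := Finset.mem_range.mp hi; omega))]
            rw [Finset.sum_range_succ] at hsum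
            simp only [List.length_append, List.length_cons, List.length_nil] at hsum ⊢
            have hh : (Finset.range k).sum f = ∑ x ∈ Finset.range k, f x := rfl
            omega
          · rw [List.range_succ, List.flatMap_append,
              flatMap_range_congr k _ (fun i => List.replicate (f i) (i + 1))
                (fun i hi => by simp [Nat.ne_of_lt hi])]
            rw [List.range_succ, List.flatMap_append] at heq
            simp only [List.flatMap_cons, List.flatMap_nil, List.append_nil,
              eq_self_iff_true, if_true] at heq ⊢
            rw [List.replicate_succ', heq, List.append_assoc]

set_option linter.unnecessarySeqFocus false in
lemma rgf_mem_take {w : List ℕ} (hw : IsRGF w) :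
    ∀ j, j ≤ w.length → ∀ v, 1 ≤ v → v ≤ (w.take j).foldr max 0 → v ∈ w.take j := by
  intro j
  induction j with
  | zero => intro _ v hv h; simp at h; omega
  | succ j ih =>
      intro hj v hv h
      have hjlen : j < w.length := hj
      have htake : w.take (j + 1) = w.take j ++ [w[j]] := by
        rw [List.take_succ]; simp [List.getElem?_eq_getElem hjlen]
      rw [htake] at h ⊢
      rw [List.foldr_append] at h
      simp only [List.foldr_cons, List.foldr_nil] at h
      rw [foldr_max_init] at h
      set M := (w.take j).foldr max 0 with hM
      by_cases hvM : v ≤ M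
      · exact List.mem_append_left _ (ih (by omega) v hv hvM)
      · have hvj : v ≤ w[j] := by omega
        have hj_le : w[j] ≤ 1 + M := by
          cases j with
          | zero =>
              have h0 : w.getD 0 0 = 1 := hw.2.1 (by omega)
              rw [List.getD_eq_getElem _ _ (by omega)] at h0
              simp [h0]
          | succ j' =>
              have hgrow := hw.2.2 j' (by omega)
              rw [List.getD_eq_getElem _ _ (by omega)] at hgrow
              exact hgrow
        have hveq : v = w[j] := by omega
        subst hveq
        exact List.mem_append_right _ (by simp)

lemma chain_of_Rn {w : List ℕ} (hR : IsRGF w) (hC : ¬ ContainsPat w [1, 2, 1]) :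
    List.Chain' StepR w := by
  have hle : ∀ j, (hj : j + 1 < w.length) → w[j]'(by omega) ≤ w[j+1]'hj := by
    intro j hj
    by_contra hlt
    push_neg at hlt
    have hv1 : 1 ≤ w[j+1] := hR.1 _ (List.getElem_mem _)
    have h0 : w.getD 0 0 = 1 := hR.2.1 (by omega)
    rw [List.getD_eq_getElem _ _ (by omega)] at h0
    rcases Nat.eq_zero_or_pos j with rfl | hjpos
    · omega
    · have hgrow := hR.2.2 (j - 1) (by omega)
      have hj1 : j - 1 + 1 = j := by omega
      rw [hj1, List.getD_eq_getElem _ _ (by omega)] at hgrow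
      have hvM : w[j+1] ≤ (w.take j).foldr max 0 := by omega
      have hmem := rgf_mem_take hR j (by omega) (w[j+1]) hv1 hvM
      obtain ⟨i, hi, hieq⟩ := List.getElem_of_mem hmem
      have hilen : i < j := by simp only [List.length_take] at hi; omega
      rw [List.getElem_take] at hieq
      apply hC
      refine ⟨![⟨i, by omega⟩, ⟨j, by omega⟩, ⟨j+1, hj⟩], ?_, ?_⟩
      · intro a b hab
        fin_cases a <;> fin_cases b <;>
          simp_all [Fin.mk_lt_mk] <;> omega
      · intro a b
        fin_cases a <;> fin_cases b <;>
          simp_all [Fin.mk_lt_mk, List.get_eq_getElem] <;> omega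
  have hchain_le : List.Chain' (· ≤ ·) w :=
    List.isChain_iff_getElem.mpr (fun i h => by
      simpa using hle i (by omega))
  have hpair : List.Pairwise (· ≤ ·) w := List.isChain_iff_pairwise.mp hchain_le
  refine List.isChain_iff_getElem.mpr (fun j h => ?_)
  have hj : j + 1 < w.length := by omega
  refine ⟨by simpa using hle j hj, ?_⟩
  have hgrow := hR.2.2 j hj
  rw [List.getD_eq_getElem _ _ hj] at hgrow
  have hMle : (w.take (j+1)).foldr max 0 ≤ w[j] := by
    refine foldr_max_le (fun a ha => ?_)
    obtain ⟨i, hi, hieq⟩ := List.getElem_of_mem ha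
    have hilen : i < j + 1 := by
      have := hi; simp only [List.length_take] at this; omega
    rw [List.getElem_take] at hieq
    subst hieq
    rcases Nat.lt_or_ge i j with hij | hij
    · exact List.pairwise_iff_get.mp hpair ⟨i, by omega⟩ ⟨j, by omega⟩ hij
    · have : i = j := by omega
      subst this; exact le_refl _
  omega

lemma RnMem_of_nice {w : List ℕ} (hne : w ≠ []) (hhead : w.getD 0 0 = 1)
    (hchain : List.Chain' StepR w) :
    IsRGF w ∧ ¬ ContainsPat w [1, 2, 1] := by
  have hlen : 0 < w.length := List.length_pos_iff.mpr hne
  have hchain_le : List.Chain' (· ≤ ·) w := hchain.imp (fun a b h => h.1)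
  have hpair : List.Pairwise (· ≤ ·) w := List.isChain_iff_pairwise.mp hchain_le
  have hget : ∀ i j (hi : i < w.length) (hj : j < w.length), i ≤ j → w[i] ≤ w[j] := by
    intro i j hi hj hij
    rcases Nat.lt_or_ge i j with h | h
    · exact List.pairwise_iff_get.mp hpair ⟨i, hi⟩ ⟨j, hj⟩ h
    · have : i = j := by omega
      subst this; exact le_refl _
  have h0 : w[0] = 1 := by rw [← List.getD_eq_getElem w 0 hlen]; exact hhead
  have hsteps := List.isChain_iff_getElem.mp hchain
  constructor
  · refine ⟨?_, fun _ => hhead, ?_⟩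
    · intro a ha
      obtain ⟨i, hi, rfl⟩ := List.getElem_of_mem ha
      have := hget 0 i hlen hi (Nat.zero_le i)
      omega
    · intro j hj
      have hstep := hsteps j (by omega)
      have hjmem : w[j] ∈ w.take (j + 1) := by
        have hl : j < (w.take (j + 1)).length := by
          simp only [List.length_take]; omega
        have he : (w.take (j + 1))[j] = w[j] := List.getElem_take
        rw [← he]
        exact List.getElem_mem hl
      have hfold := le_foldr_max hjmem
      obtain ⟨hs1, hs2⟩ := hstep
      rw [List.getD_eq_getElem _ _ hj]
      omega
  · rintro ⟨f, hmono, hpat⟩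
    have e01 := hpat ⟨0, by norm_num⟩ ⟨1, by norm_num⟩
    have e02 := hpat ⟨0, by norm_num⟩ ⟨2, by norm_num⟩
    have hp01 : ([1, 2, 1] : List ℕ).get ⟨0, by norm_num⟩ = 1 := rfl
    have hp1 : ([1, 2, 1] : List ℕ).get ⟨1, by norm_num⟩ = 2 := rfl
    have hp2 : ([1, 2, 1] : List ℕ).get ⟨2, by norm_num⟩ = 1 := rfl
    rw [hp01, hp1] at e01
    rw [hp01, hp2] at e02
    have hne01 : w.get (f ⟨0, by norm_num⟩) ≠ w.get (f ⟨1, by norm_num⟩) := by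
      intro h; exact absurd (e01.mp h) (by norm_num)
    have heq02 : w.get (f ⟨0, by norm_num⟩) = w.get (f ⟨2, by norm_num⟩) := e02.mpr rfl
    have hm01 : f ⟨0, by norm_num⟩ < f ⟨1, by norm_num⟩ := hmono (Fin.mk_lt_mk.mpr (by norm_num))
    have hm12 : f ⟨1, by norm_num⟩ < f ⟨2, by norm_num⟩ := hmono (Fin.mk_lt_mk.mpr (by norm_num))
    have g01 := hget (f ⟨0, by norm_num⟩) (f ⟨1, by norm_num⟩)
      (Fin.is_lt _) (Fin.is_lt _) (le_of_lt hm01)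
    have g12 := hget (f ⟨1, by norm_num⟩) (f ⟨2, by norm_num⟩)
      (Fin.is_lt _) (Fin.is_lt _) (le_of_lt hm12)
    simp only [List.get_eq_getElem] at hne01 heq02
    omega

/-- For every `n ≥ 1`, `R_n(13/2)` equals the set of layered
words `1^{n_1} 2^{n_2} ⋯ m^{n_m}` with `m ≥ 1`, all `n_i > 0` and
`n_1 + ⋯ + n_m = n`. -/
theorem stmt2 (n : ℕ) (hn : 1 ≤ n) :
    Rn n [1, 2, 1] =
      {w : List ℕ | ∃ (m : ℕ) (f : ℕ → ℕ), 1 ≤ m ∧ (∀ i < m, 0 < f i) ∧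
        (∑ i ∈ Finset.range m, f i) = n ∧
        w = (List.range m).flatMap fun i => List.replicate (f i) (i + 1)} := by
  ext w
  simp only [Set.mem_setOf_eq]
  constructor
  · rintro ⟨hlen, hrgf, hpat⟩
    have hlen0 : 0 < w.length := by omega
    have hne : w ≠ [] := List.length_pos_iff.mp hlen0
    have hhead : w.getD 0 0 = 1 := hrgf.2.1 hlen0
    have hchain := chain_of_Rn hrgf hpat
    obtain ⟨m, f, hm, hf, hsum, heq⟩ := repr_of_nice w hne hhead hchain
    exact ⟨m, f, hm, hf, by rw [hsum, hlen], heq⟩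
  · rintro ⟨m, f, hm, hf, hsum, rfl⟩
    obtain ⟨h1, h2, h3, h4, h5⟩ := bind_props m f hm hf
    obtain ⟨hrgf, hnc⟩ := RnMem_of_nice h5 h1 h3
    exact ⟨h4.trans hsum, hrgf, hnc⟩
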